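/- Let G be an Abelian group of cardinality γ > ℵ₀, let F_γ be the free group of rank γ, and let κ be a cardinal such that either ℵ₀ < κ < γ, or κ = γ and γ is singular. Then there is no ≺-mapping f : G → F_γ (with respect to κ) whose image is large, i.e., there exist no map f : G → F_γ and set K ∈ [F_γ]^{<κ} such that F_γ = K·f(G) and for every X ∈ [G]^{<κ} there exists Y ∈ [F_γ]^{<κ} with f(X·x) ⊆ Y·f(x) for all x ∈ G. -/

import Mathlib

open Cardinal Pointwise

universe u

namespace NoPrecAux

variable {ι : Type u} [DecidableEq ι]

def supp (w : FreeGroup ι) : Set ι := {i | ∃ b, (i, b) ∈ w.toWord}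

lemma supp_finite (w : FreeGroup ι) : (supp w).Finite := by
  apply (List.finite_toSet (w.toWord.map Prod.fst)).subset
  rintro i ⟨b, hb⟩
  exact List.mem_map.2 ⟨(i, b), hb, rfl⟩

lemma mk_supp_le (w : FreeGroup ι) : #(supp w) ≤ ℵ₀ := (supp_finite w).lt_aleph0.le

lemma supp_mul (u v : FreeGroup ι) : supp (u * v) ⊆ supp u ∪ supp v := by
  rintro i ⟨b, hb⟩
  have := (FreeGroup.toWord_mul_sublist u v).subset hb
  rcases List.mem_append.1 this with h | h
  · exact Or.inl ⟨b, h⟩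
  · exact Or.inr ⟨b, h⟩

lemma supp_inv (u : FreeGroup ι) : supp u⁻¹ ⊆ supp u := by
  rintro i ⟨b, hb⟩
  rw [FreeGroup.toWord_inv, FreeGroup.invRev] at hb
  rcases List.mem_map.1 (List.mem_reverse.1 hb) with ⟨⟨i', b'⟩, h, heq⟩
  obtain ⟨rfl, -⟩ : i' = i ∧ (!b') = b := Prod.mk.injEq .. ▸ by simpa using heq
  exact ⟨b', h⟩

lemma supp_of (i : ι) : supp (FreeGroup.of i) ⊆ {i} := by
  rintro i' ⟨b, hb⟩
  rw [FreeGroup.toWord_of] at hb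
  simp at hb
  simp [hb.1]

lemma notMem_supp_mul {j : ι} {u v : FreeGroup ι} (hu : j ∉ supp u) (hv : j ∉ supp v) :
    j ∉ supp (u * v) := fun h => (supp_mul u v h).elim hu hv

lemma notMem_supp_inv {j : ι} {u : FreeGroup ι} (hu : j ∉ supp u) : j ∉ supp u⁻¹ :=
  fun h => hu (supp_inv u h)

lemma notMem_supp_of {j i : ι} (h : j ≠ i) : j ∉ supp (FreeGroup.of i) :=
  fun hm => h (supp_of i hm)

lemma reduce_append (L : List (ι × Bool)) (j : ι) (h : ∀ b, (j, b) ∉ L) :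
    FreeGroup.reduce (L ++ [(j, true)]) = FreeGroup.reduce L ++ [(j, true)] := by
  induction L with
  | nil => simp [FreeGroup.reduce]
  | cons x L ih =>
    have hx : x.1 ≠ j := by
      intro hxj
      exact h x.2 (by rw [← hxj, Prod.mk.eta]; exact List.mem_cons_self)
    have h' : ∀ b, (j, b) ∉ L := fun b hb => h b (List.mem_cons_of_mem _ hb)
    rw [List.cons_append, FreeGroup.reduce.cons, FreeGroup.reduce.cons, ih h']
    cases hL : FreeGroup.reduce L with
    | nil => simp [hx]
    | cons y t =>
      by_cases hc : x.1 = y.1 ∧ x.2 = !y.2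
      · simp [hc]
      · simp [hc]

lemma toWord_mul_of {u : FreeGroup ι} {j : ι} (h : j ∉ supp u) :
    (u * FreeGroup.of j).toWord = u.toWord ++ [(j, true)] := by
  have h' : ∀ b, (j, b) ∉ u.toWord := by
    intro b hb; exact h ⟨b, hb⟩
  have hof : (FreeGroup.of j : FreeGroup ι) = FreeGroup.mk [(j, true)] := by
    rw [← FreeGroup.toWord_inj, FreeGroup.toWord_of, FreeGroup.toWord_mk,
      FreeGroup.reduce_singleton]
  calc (u * FreeGroup.of j).toWord
      = (FreeGroup.mk (u.toWord ++ [(j, true)])).toWord := by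
        rw [hof, ← FreeGroup.mul_mk, FreeGroup.mk_toWord]
    _ = FreeGroup.reduce (u.toWord ++ [(j, true)]) := FreeGroup.toWord_mk
    _ = FreeGroup.reduce u.toWord ++ [(j, true)] := reduce_append _ _ h'
    _ = u.toWord ++ [(j, true)] := by rw [FreeGroup.reduce_toWord]

lemma last_letter_eq {u v : FreeGroup ι} {j j' : ι} (h : u * FreeGroup.of j = v * FreeGroup.of j')
    (hj : j ∉ supp u) (hj' : j' ∉ supp v) : j = j' := by
  have := congrArg FreeGroup.toWord h
  rw [toWord_mul_of hj, toWord_mul_of hj'] at this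
  have := congrArg List.getLast? this
  rw [List.getLast?_concat, List.getLast?_concat] at this
  exact (Prod.ext_iff.1 (Option.some_injective _ this)).1

/-- letters occurring in elements of a set of words -/
def SuppS (S : Set (FreeGroup ι)) : Set ι := ⋃ w ∈ S, supp w

lemma supp_subset_SuppS {w : FreeGroup ι} {S : Set (FreeGroup ι)} (hw : w ∈ S) :
    supp w ⊆ SuppS S := Set.subset_biUnion_of_mem hw

lemma mk_SuppS_le (S : Set (FreeGroup ι)) : #(SuppS S) ≤ #S * ℵ₀ := by
  refine (Cardinal.mk_biUnion_le supp S).trans ?_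
  rcases isEmpty_or_nonempty S with h | h
  · simp
  · refine mul_le_mul_right ?_ #↑S
    exact ciSup_le' fun (x : ↥S) => mk_supp_le (x : FreeGroup ι)

lemma mk_SuppS_lt {S : Set (FreeGroup ι)} {c : Cardinal} (hc : ℵ₀ < c) (hS : #S < c) :
    #(SuppS S) < c :=
  (mk_SuppS_le S).trans_lt (Cardinal.mul_lt_of_lt hc.le hS hc)

noncomputable def pick [Nonempty ι] (B : Set ι) : ι :=
  Classical.epsilon fun i => i ∉ B

lemma pick_notMem [Nonempty ι] {B : Set ι} (h : #B < #ι) : pick B ∉ B := by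
  have hex : ∃ i, i ∉ B := by
    by_contra hall
    push_neg at hall
    rw [Set.eq_univ_iff_forall.2 hall, Cardinal.mk_univ] at h
    exact lt_irrefl _ h
  exact Classical.epsilon_spec hex

noncomputable def diag {W : Type v} [LT W] (hwf : WellFounded ((· < ·) : W → W → Prop))
    [Nonempty ι] (T : Set ι → Set ι) : W → ι :=
  hwf.fix (fun α rec => pick (T (Set.range fun β : {β // β < α} => rec β β.2)))

lemma diag_eq {W : Type v} [LT W] (hwf : WellFounded ((· < ·) : W → W → Prop))
    [Nonempty ι] (T : Set ι → Set ι) (α : W) :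
    diag hwf T α = pick (T (diag hwf T '' {β | β < α})) := by
  rw [diag, WellFounded.fix_eq]
  rw [Set.image_eq_range]
  rfl

lemma core {G : Type v} [CommGroup G] (f : G → FreeGroup ι)
    (g₁ g₂ gs : G) (j₁ j₂ js : ι) (k₁ k₂ ks : FreeGroup ι)
    (h1 : f g₁ = k₁⁻¹ * FreeGroup.of j₁) (h2 : f g₂ = k₂⁻¹ * FreeGroup.of j₂)
    (hs : f gs = ks⁻¹ * FreeGroup.of js)
    (heq : f (gs * g₁) * (f g₁)⁻¹ = f (gs * g₂) * (f g₂)⁻¹)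
    (hd1 : j₂ ∉ supp (f (g₁ * gs) * (f gs)⁻¹))
    (hd2 : js ∉ supp (f (g₂ * gs) * (f gs)⁻¹))
    (hk1 : j₂ ∉ supp k₁) (hk2 : j₂ ∉ supp k₂) (hksj2 : j₂ ∉ supp ks) (hksjs : js ∉ supp ks)
    (hne1 : j₂ ≠ j₁) (hnes : j₂ ≠ js) : False := by
  have hofs : FreeGroup.of js = ks * f gs := by rw [hs]; group
  have hof1 : FreeGroup.of j₁ = k₁ * f g₁ := by rw [h1]; group
  have hof2 : FreeGroup.of j₂ = k₂ * f g₂ := by rw [h2]; group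
  have key0 : f (gs * g₁) * (f g₁)⁻¹ * f g₂ = f (gs * g₂) := by rw [heq]; group
  have key : (f (g₂ * gs) * (f gs)⁻¹ * ks⁻¹) * FreeGroup.of js =
      (f (g₁ * gs) * (f gs)⁻¹ * ks⁻¹ * FreeGroup.of js * (FreeGroup.of j₁)⁻¹ * k₁ * k₂⁻¹) *
        FreeGroup.of j₂ := by
    rw [hofs, hof1, hof2, mul_comm g₁ gs, mul_comm g₂ gs, ← key0]
    group
  have hjs : js ∉ supp (f (g₂ * gs) * (f gs)⁻¹ * ks⁻¹) :=
    notMem_supp_mul hd2 (notMem_supp_inv hksjs)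
  have hj2 : j₂ ∉ supp (f (g₁ * gs) * (f gs)⁻¹ * ks⁻¹ * FreeGroup.of js * (FreeGroup.of j₁)⁻¹ *
      k₁ * k₂⁻¹) :=
    notMem_supp_mul (notMem_supp_mul (notMem_supp_mul (notMem_supp_mul
      (notMem_supp_mul hd1 (notMem_supp_inv hksj2)) (notMem_supp_of hnes))
      (notMem_supp_inv (notMem_supp_of hne1))) hk1) (notMem_supp_inv hk2)
  exact hnes.symm (last_letter_eq key hjs hj2)

end NoPrecAux

open NoPrecAux in
/-- Let `G` be an Abelian group of cardinality `γ > ℵ₀` and let `F_γ` be the free group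
of rank `γ`. If either `ℵ₀ < κ < γ`, or `κ = γ` and `γ` is singular, then there is no
`≺`-mapping `f : G → F_γ` (with respect to `κ`) whose image is large: there are no
`f : G → F_γ` and `K ∈ [F_γ]^{<κ}` with `F_γ = K ⬝ f(G)` such that for every
`X ∈ [G]^{<κ}` there is `Y ∈ [F_γ]^{<κ}` with `f(X x) ⊆ Y ⬝ f(x)` for all `x ∈ G`. -/
theorem no_large_precmap_abelian_to_free (γ κ : Cardinal.{u}) (hγ : ℵ₀ < γ)
    (hκ : (ℵ₀ < κ ∧ κ < γ) ∨ (κ = γ ∧ γ.ord.cof < γ))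
    (G : Type u) [CommGroup G] (hG : #G = γ)
    (ι : Type u) (hι : #ι = γ) :
    ¬ ∃ (f : G → FreeGroup ι) (K : Set (FreeGroup ι)),
        #K < κ ∧ K * Set.range f = Set.univ ∧
        ∀ X : Set G, #X < κ → ∃ Y : Set (FreeGroup ι), #Y < κ ∧
          ∀ x : G, f '' (X * {x}) ⊆ Y * {f x} := by
  classical
  rintro ⟨f, K, hK, hlarge, hprec⟩
  have hκ0 : ℵ₀ < κ := by
    rcases hκ with ⟨h, _⟩ | ⟨rfl, _⟩
    · exact h
    · exact hγ
  have hκγ : κ ≤ γ := by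
    rcases hκ with ⟨_, h⟩ | ⟨rfl, _⟩
    · exact h.le
    · exact le_rfl
  have hιne : Nonempty ι := by
    rw [← Cardinal.mk_ne_zero_iff, hι]
    exact (aleph0_pos.trans hγ).ne'
  -- witnesses for each letter
  have hwit : ∀ i : ι, ∃ (a : G) (c : FreeGroup ι), c ∈ K ∧ f a = c⁻¹ * FreeGroup.of i := by
    intro i
    have hmem : FreeGroup.of i ∈ K * Set.range f := by rw [hlarge]; exact Set.mem_univ _
    rcases Set.mem_mul.1 hmem with ⟨c, hc, w, ⟨a, rfl⟩, hcw⟩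
    exact ⟨a, c, hc, by rw [← hcw]; group⟩
  choose g k hkK hfg using hwit
  -- the Y-chooser
  have hYex : ∀ X : Set G, ∃ Y : Set (FreeGroup ι),
      #X < κ → #Y < κ ∧ ∀ a ∈ X, ∀ x : G, f (a * x) * (f x)⁻¹ ∈ Y := by
    intro X
    by_cases hX : #X < κ
    · rcases hprec X hX with ⟨Y, hY, hYsub⟩
      refine ⟨Y, fun _ => ⟨hY, ?_⟩⟩
      intro a ha x
      have hmem : f (a * x) ∈ Y * {f x} :=
        hYsub x ⟨a * x, Set.mul_mem_mul ha (Set.mem_singleton x), rfl⟩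
      rcases Set.mem_mul.1 hmem with ⟨y, hy, z, hz, hyz⟩
      rw [Set.mem_singleton_iff] at hz
      subst hz
      rw [← hyz, mul_inv_cancel_right]
      exact hy
    · exact ⟨∅, fun h => absurd h hX⟩
  choose Ych hYch using hYex
  -- the index type
  have hWmk : #(κ.ord.ToType) = κ := by rw [Cardinal.mk_toType, Cardinal.card_ord]
  have hIio : ∀ α : κ.ord.ToType, #(Set.Iio α) < κ := fun α => Cardinal.mk_Iio_ord_toType α
  have hWne : Nonempty κ.ord.ToType := by
    rw [← Cardinal.mk_ne_zero_iff, hWmk]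
    exact (aleph0_pos.trans hκ0).ne'
  haveI : IsWellOrder κ.ord.ToType (· < ·) := isWellOrder_lt
  have hwf : WellFounded ((· < ·) : κ.ord.ToType → κ.ord.ToType → Prop) := wellFounded_lt
  -- the recursively chosen letters
  set T : Set ι → Set ι := fun E => SuppS K ∪ E ∪ SuppS (Ych (g '' E)) with hTdef
  set j : κ.ord.ToType → ι := diag hwf T with hjdef
  have hSuppK : #(SuppS K) < κ := mk_SuppS_lt hκ0 hK
  have himg : ∀ α : κ.ord.ToType, #(g '' (j '' Set.Iio α)) < κ := fun α =>
    Cardinal.mk_image_le.trans_lt (Cardinal.mk_image_le.trans_lt (hIio α))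
  have hjspec : ∀ α : κ.ord.ToType, j α ∉ T (j '' Set.Iio α) := by
    intro α
    have hT : #(T (j '' Set.Iio α)) < γ := by
      have h1 : #(j '' Set.Iio α) < κ := Cardinal.mk_image_le.trans_lt (hIio α)
      have h4 : #(SuppS (Ych (g '' (j '' Set.Iio α)))) < κ :=
        mk_SuppS_lt hκ0 (hYch _ (himg α)).1
      have hu1 : #(SuppS K ∪ (j '' Set.Iio α) : Set ι) < γ :=
        (Cardinal.mk_union_le _ _).trans_lt
          (Cardinal.add_lt_of_lt hγ.le (hSuppK.trans_le hκγ) (h1.trans_le hκγ))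
      exact (Cardinal.mk_union_le _ _).trans_lt
        (Cardinal.add_lt_of_lt hγ.le hu1 (h4.trans_le hκγ))
    have : j α = pick (T (j '' {β | β < α})) := diag_eq hwf T α
    rw [show {β | β < α} = Set.Iio α from rfl] at this
    rw [this]
    exact pick_notMem (by rw [hι]; exact hT)
  have hjK : ∀ α, j α ∉ SuppS K := fun α h => hjspec α (Or.inl (Or.inl h))
  have hjE : ∀ α, j α ∉ j '' Set.Iio α := fun α h => hjspec α (Or.inl (Or.inr h))
  have hjY : ∀ α, j α ∉ SuppS (Ych (g '' (j '' Set.Iio α))) := fun α h => hjspec α (Or.inr h)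
  -- membership of the derivation elements
  have hdmem : ∀ (α β : κ.ord.ToType), β < α → ∀ x : G,
      f (g (j β) * x) * (f x)⁻¹ ∈ Ych (g '' (j '' Set.Iio α)) := by
    intro α β hβ x
    exact (hYch _ (himg α)).2 (g (j β))
      (Set.mem_image_of_mem g (Set.mem_image_of_mem j hβ)) x
  have hYXnot : ∀ (α β : κ.ord.ToType), β < α → ∀ x : G,
      j α ∉ supp (f (g (j β) * x) * (f x)⁻¹) :=
    fun α β hβ x h => hjY α (supp_subset_SuppS (hdmem α β hβ x) h)
  -- distinctness of the letters
  have hjne : ∀ (α β : κ.ord.ToType), β < α → j α ≠ j β :=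
    fun α β hβ h => hjE α (h ▸ Set.mem_image_of_mem j hβ)
  -- the final contradiction machine
  have final : ∀ (js : ι) (β β' : κ.ord.ToType), β < β' →
      js ∉ SuppS K → js ≠ j β' →
      js ∉ supp (f (g (j β') * g js) * (f (g js))⁻¹) →
      f (g js * g (j β)) * (f (g (j β)))⁻¹ = f (g js * g (j β')) * (f (g (j β')))⁻¹ →
      False := by
    intro js β β' hlt hjsK hjsne hd2 heq
    refine core f (g (j β)) (g (j β')) (g js) (j β) (j β') js
      (k (j β)) (k (j β')) (k js) (hfg (j β)) (hfg (j β')) (hfg js) heq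
      ?_ hd2 ?_ ?_ ?_ ?_ ?_ (Ne.symm hjsne)
    · exact hYXnot β' β hlt (g js)
    · exact fun h => hjK β' (supp_subset_SuppS (hkK (j β)) h)
    · exact fun h => hjK β' (supp_subset_SuppS (hkK (j β')) h)
    · exact fun h => hjK β' (supp_subset_SuppS (hkK js) h)
    · exact fun h => hjsK (supp_subset_SuppS (hkK js) h)
    · exact hjne β' β hlt
  -- now the two cases
  rcases hκ with ⟨-, hκγ'⟩ | ⟨heqκ, hcof⟩
  · -- Case 1 : ℵ₀ < κ < γ
    have hsing : ∀ a : G, #({a} : Set G) < κ := fun a => by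
      rw [Cardinal.mk_singleton]
      exact one_lt_aleph0.trans hκ0
    have hBadTop : #((SuppS K ∪ Set.range j ∪
        ⋃ β : κ.ord.ToType, SuppS (Ych {g (j β)})) : Set ι) < γ := by
      have h1 : #(Set.range j) < γ := (Cardinal.mk_range_le).trans_lt (by rw [hWmk]; exact hκγ')
      have h2 : #(⋃ β : κ.ord.ToType, SuppS (Ych {g (j β)})) < γ := by
        refine (Cardinal.mk_iUnion_le _).trans_lt ?_
        have hsup : ⨆ β : κ.ord.ToType, #(SuppS (Ych {g (j β)})) ≤ κ :=
          ciSup_le' fun β => (mk_SuppS_lt hκ0 (hYch _ (hsing (g (j β)))).1).le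
        refine lt_of_le_of_lt (mul_le_mul' (hWmk.le) hsup) ?_
        exact Cardinal.mul_lt_of_lt hγ.le hκγ' hκγ'
      exact (Cardinal.mk_union_le _ _).trans_lt (Cardinal.add_lt_of_lt hγ.le
        ((Cardinal.mk_union_le _ _).trans_lt (Cardinal.add_lt_of_lt hγ.le
          (hSuppK.trans hκγ') h1)) h2)
    set js : ι := pick (SuppS K ∪ Set.range j ∪
        ⋃ β : κ.ord.ToType, SuppS (Ych {g (j β)})) with hjsdef
    have hjs : js ∉ SuppS K ∪ Set.range j ∪ ⋃ β : κ.ord.ToType, SuppS (Ych {g (j β)}) :=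
      pick_notMem (by rw [hι]; exact hBadTop)
    have hjsK : js ∉ SuppS K := fun h => hjs (Or.inl (Or.inl h))
    have hjsrange : ∀ β, js ≠ j β := fun β h => hjs (Or.inl (Or.inr ⟨β, h.symm⟩))
    have hjsY : ∀ β : κ.ord.ToType, js ∉ SuppS (Ych {g (j β)}) :=
      fun β h => hjs (Or.inr (Set.mem_iUnion.2 ⟨β, h⟩))
    -- pigeonhole
    have hφ : ∀ β : κ.ord.ToType, f (g js * g (j β)) * (f (g (j β)))⁻¹ ∈ Ych {g js} :=
      fun β => (hYch _ (hsing (g js))).2 (g js) (Set.mem_singleton _) (g (j β))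
    have hninj : ¬ Function.Injective
        (fun β : κ.ord.ToType => (⟨_, hφ β⟩ : ↥(Ych {g js}))) := by
      intro hinj
      have := Cardinal.mk_le_of_injective hinj
      rw [hWmk] at this
      exact absurd (this.trans_lt (hYch _ (hsing (g js))).1) (lt_irrefl κ)
    rw [Function.not_injective_iff] at hninj
    obtain ⟨β, β', hfeq, hne⟩ := hninj
    have hfeq' : f (g js * g (j β)) * (f (g (j β)))⁻¹ =
        f (g js * g (j β')) * (f (g (j β')))⁻¹ := congrArg Subtype.val hfeq
    have hd2mem : ∀ β0 β1 : κ.ord.ToType, js ∉ supp (f (g (j β1) * g js) * (f (g js))⁻¹) := by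
      intro β0 β1 h
      exact hjsY β1 (supp_subset_SuppS
        ((hYch _ (hsing (g (j β1)))).2 (g (j β1)) (Set.mem_singleton _) (g js)) h)
    rcases hne.lt_or_gt with hlt | hlt
    · exact final js β β' hlt hjsK (hjsrange β') (hd2mem β β') hfeq'
    · exact final js β' β hlt hjsK (hjsrange β) (hd2mem β' β) hfeq'.symm
  · -- Case 2 : κ = γ singular
    subst heqκ
    obtain ⟨S, hSub, hScard⟩ :=
      Order.exists_cof_eq κ.ord.ToType
    have hS : #S < κ := by
      rw [hScard, Ordinal.cof_toType]
      exact hcof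
    have hXT : #(g '' (j '' S)) < κ :=
      Cardinal.mk_image_le.trans_lt (Cardinal.mk_image_le.trans_lt hS)
    have hYT := hYch _ hXT
    -- find a large enough α ∈ S
    have hsup : (#(Ych (g '' (j '' S))) ⊔ ℵ₀) < κ := sup_lt_iff.2 ⟨hYT.1, hκ0⟩
    have hsucc : Order.succ (#(Ych (g '' (j '' S))) ⊔ ℵ₀) < κ := by
      by_contra hge
      push_neg at hge
      have hle : Order.succ (#(Ych (g '' (j '' S))) ⊔ ℵ₀) ≤ κ := Order.succ_le_of_lt hsup
      have heq2 : κ = Order.succ (#(Ych (g '' (j '' S))) ⊔ ℵ₀) := le_antisymm hge hle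
      have hreg : (Order.succ (#(Ych (g '' (j '' S))) ⊔ ℵ₀)).IsRegular :=
        Cardinal.isRegular_succ le_sup_right
      rw [← heq2] at hreg
      exact hcof.ne hreg.cof_eq
    have hνord : (Order.succ (#(Ych (g '' (j '' S))) ⊔ ℵ₀)).ord <
        Ordinal.type ((· < ·) : κ.ord.ToType → κ.ord.ToType → Prop) := by
      rw [Ordinal.type_toType]
      exact Cardinal.ord_lt_ord.2 hsucc
    obtain ⟨w₀, hw₀⟩ := Ordinal.typein_surj ((· < ·) : κ.ord.ToType → κ.ord.ToType → Prop) hνord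
    obtain ⟨α, hαS, hα⟩ := hSub w₀
    have hw₀α : w₀ ≤ α := hα
    have hIw : #(Set.Iio w₀) = Order.succ (#(Ych (g '' (j '' S))) ⊔ ℵ₀) := by
      have hct : #(Set.Iio w₀) = (Ordinal.typein (α := κ.ord.ToType) (· < ·) w₀).card :=
        @Ordinal.card_typein κ.ord.ToType (· < ·) _ w₀
      rw [hct, hw₀, Cardinal.card_ord]
    have hbig : #(Ych (g '' (j '' S))) < #(Set.Iio α) := by
      calc #(Ych (g '' (j '' S))) < Order.succ (#(Ych (g '' (j '' S))) ⊔ ℵ₀) :=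
            lt_of_le_of_lt le_sup_left (Order.lt_succ _)
        _ = #(Set.Iio w₀) := hIw.symm
        _ ≤ #(Set.Iio α) := Cardinal.mk_le_mk_of_subset (Set.Iio_subset_Iio hw₀α)
    have hφ : ∀ β : ↥(Set.Iio α), f (g (j α) * g (j β)) * (f (g (j β)))⁻¹ ∈
        Ych (g '' (j '' S)) :=
      fun β => hYT.2 (g (j α)) (Set.mem_image_of_mem g (Set.mem_image_of_mem j hαS)) (g (j β))
    have hninj : ¬ Function.Injective
        (fun β : ↥(Set.Iio α) => (⟨_, hφ β⟩ : ↥(Ych (g '' (j '' S))))) := by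
      intro hinj
      exact absurd (Cardinal.mk_le_of_injective hinj) (not_le.2 hbig)
    rw [Function.not_injective_iff] at hninj
    obtain ⟨β, β', hfeq, hne⟩ := hninj
    have hfeq' : f (g (j α) * g (j (β : κ.ord.ToType))) * (f (g (j (β : κ.ord.ToType))))⁻¹ =
        f (g (j α) * g (j (β' : κ.ord.ToType))) * (f (g (j (β' : κ.ord.ToType))))⁻¹ :=
      congrArg Subtype.val hfeq
    have hd2mem : ∀ β1 : ↥(Set.Iio α),
        j α ∉ supp (f (g (j (β1 : κ.ord.ToType)) * g (j α)) * (f (g (j α)))⁻¹) :=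
      fun β1 => hYXnot α β1 β1.2 (g (j α))
    have hsubne : (β : κ.ord.ToType) ≠ (β' : κ.ord.ToType) := fun h => hne (Subtype.ext h)
    rcases hsubne.lt_or_gt with hlt | hlt
    · exact final (j α) β β' hlt (hjK α) (hjne α β' β'.2) (hd2mem β') hfeq'
    · exact final (j α) β' β hlt (hjK α) (hjne α β β.2) (hd2mem β) hfeq'.symm
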